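/- Let p be an odd prime, n, g ≥ 1, A = (ℤ/pⁿℤ)^g, K = (ℤ/pⁿℤ)^{2g} with the standard symplectic form. The symplectic group Sp_{2g}(ℤ/pⁿℤ) acting on K has exactly n+1 orbits, with representatives (p^r e₁, 0) for r = 0,…,n; the orbit of (p^r e₁,0) consists of all vectors all of whose entries are divisible by p^r but not all divisible by p^{r+1}. -/

import Mathlib

/-!
Statement 18: orbits of `Sp_{2g}(ℤ/pⁿℤ)` on `K = (ℤ/pⁿℤ)^{2g}` for `p` an odd
prime: there are exactly `n+1` orbits, with representatives `(p^r e₁, 0)`,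
`r = 0, …, n`; the orbit of `(p^r e₁, 0)` consists of the vectors all of whose
entries are divisible by `p^r` but not all divisible by `p^{r+1}`.
-/

noncomputable section

variable (p n g : ℕ)

/-- `K = (ℤ/pⁿℤ)^g × (ℤ/pⁿℤ)^g`. -/
abbrev Ksymp := (Fin g → ZMod (p ^ n)) × (Fin g → ZMod (p ^ n))

/-- The standard symplectic form `((x,y),(x',y')) ↦ x·y' − x'·y`. -/
def sympForm (k l : Ksymp p n g) : ZMod (p ^ n) :=
  (∑ i, k.1 i * l.2 i) - ∑ i, l.1 i * k.2 i

/-- `α` is a symplectic automorphism, i.e. an element of `Sp_{2g}(ℤ/pⁿℤ)`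
viewed as an automorphism of `K` preserving the symplectic form. -/
def IsSymp (α : AddAut (Ksymp p n g)) : Prop :=
  ∀ a b : Ksymp p n g, sympForm p n g (α a) (α b) = sympForm p n g a b

/-- `k` and `l` lie in the same `Sp_{2g}(ℤ/pⁿℤ)`-orbit. -/
def InOrbit (k l : Ksymp p n g) : Prop :=
  ∃ α : AddAut (Ksymp p n g), IsSymp p n g α ∧ α k = l

/-- The representative `(p^r e₁, 0)`. -/
def orbitRep (r : ℕ) : Ksymp p n g :=
  (fun i => if (i : ℕ) = 0 then (p : ZMod (p ^ n)) ^ r else 0, 0)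

/-- All entries of `k` are divisible by `p^r`. -/
def DivBy (r : ℕ) (k : Ksymp p n g) : Prop :=
  (∀ i, (p : ZMod (p ^ n)) ^ r ∣ k.1 i) ∧ (∀ i, (p : ZMod (p ^ n)) ^ r ∣ k.2 i)

namespace SympAux

variable {p n g}

/-! ### Bilinearity of the symplectic form -/

lemma sympForm_add_left (k k' l : Ksymp p n g) :
    sympForm p n g (k + k') l = sympForm p n g k l + sympForm p n g k' l := by
  simp only [sympForm, Prod.fst_add, Prod.snd_add, Pi.add_apply, add_mul, mul_add,
    Finset.sum_add_distrib]
  ring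

lemma sympForm_add_right (k l l' : Ksymp p n g) :
    sympForm p n g k (l + l') = sympForm p n g k l + sympForm p n g k l' := by
  simp only [sympForm, Prod.fst_add, Prod.snd_add, Pi.add_apply, add_mul, mul_add,
    Finset.sum_add_distrib]
  ring

lemma sympForm_smul_left (c : ZMod (p ^ n)) (k l : Ksymp p n g) :
    sympForm p n g (c • k) l = c * sympForm p n g k l := by
  simp only [sympForm, Prod.smul_fst, Prod.smul_snd, Pi.smul_apply, smul_eq_mul]
  rw [mul_sub, Finset.mul_sum, Finset.mul_sum]
  congr 1 <;> exact Finset.sum_congr rfl fun i _ => by ring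

lemma sympForm_smul_right (c : ZMod (p ^ n)) (k l : Ksymp p n g) :
    sympForm p n g k (c • l) = c * sympForm p n g k l := by
  simp only [sympForm, Prod.smul_fst, Prod.smul_snd, Pi.smul_apply, smul_eq_mul]
  rw [mul_sub, Finset.mul_sum, Finset.mul_sum]
  congr 1 <;> exact Finset.sum_congr rfl fun i _ => by ring

lemma sympForm_self (k : Ksymp p n g) : sympForm p n g k k = 0 := by
  simp [sympForm]

lemma sympForm_antisymm (k l : Ksymp p n g) :
    sympForm p n g k l = - sympForm p n g l k := by
  simp only [sympForm]; ring

lemma sympForm_sub_right (k l l' : Ksymp p n g) :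
    sympForm p n g k (l - l') = sympForm p n g k l - sympForm p n g k l' := by
  simp only [sympForm, Prod.fst_sub, Prod.snd_sub, Pi.sub_apply, mul_sub, sub_mul,
    Finset.sum_sub_distrib]
  ring

/-! ### Symplectic transvections -/

/-- Symplectic transvection `w ↦ w + (c⟨w,v⟩)v`. -/
def tv (v : Ksymp p n g) (c : ZMod (p ^ n)) : AddAut (Ksymp p n g) where
  toFun w := w + (c * sympForm p n g w v) • v
  invFun w := w + (-c * sympForm p n g w v) • v
  left_inv w := by
    dsimp only
    have h : sympForm p n g (w + (c * sympForm p n g w v) • v) v = sympForm p n g w v := by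
      rw [sympForm_add_left, sympForm_smul_left, sympForm_self, mul_zero, add_zero]
    rw [h, add_assoc, ← add_smul]
    have : c * sympForm p n g w v + -c * sympForm p n g w v = 0 := by ring
    rw [this, zero_smul, add_zero]
  right_inv w := by
    dsimp only
    have h : sympForm p n g (w + (-c * sympForm p n g w v) • v) v = sympForm p n g w v := by
      rw [sympForm_add_left, sympForm_smul_left, sympForm_self, mul_zero, add_zero]
    simp only [h]
    rw [add_assoc, ← add_smul]
    have : -c * sympForm p n g w v + c * sympForm p n g w v = 0 := by ring
    rw [this, zero_smul, add_zero]
  map_add' a b := by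
    try dsimp only
    rw [sympForm_add_left, mul_add, add_smul]
    abel

lemma tv_apply (v : Ksymp p n g) (c : ZMod (p ^ n)) (w : Ksymp p n g) :
    tv v c w = w + (c * sympForm p n g w v) • v := rfl

lemma isSymp_tv (v : Ksymp p n g) (c : ZMod (p ^ n)) : IsSymp p n g (tv v c) := by
  intro a b
  simp only [tv_apply, sympForm_add_left, sympForm_add_right, sympForm_smul_left,
    sympForm_smul_right, sympForm_self]
  rw [sympForm_antisymm v b]
  ring

/-! ### The orbit relation -/

lemma inOrbit_refl (k : Ksymp p n g) : InOrbit p n g k k :=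
  ⟨0, fun _ _ => rfl, rfl⟩

lemma inOrbit_symm {k l : Ksymp p n g} (h : InOrbit p n g k l) : InOrbit p n g l k := by
  obtain ⟨α, hα, hk⟩ := h
  refine ⟨-α, fun a b => ?_, by simp [← hk]⟩
  have := hα ((-α) a) ((-α) b)
  simpa using this.symm

lemma inOrbit_trans {k l m : Ksymp p n g} (h : InOrbit p n g k l)
    (h' : InOrbit p n g l m) : InOrbit p n g k m := by
  obtain ⟨α, hα, hk⟩ := h
  obtain ⟨β, hβ, hl⟩ := h'
  exact ⟨β + α, fun a b => (hβ _ _).trans (hα a b), by simp [hk, hl]⟩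

lemma inOrbit_of_unit {u w : Ksymp p n g} (h : IsUnit (sympForm p n g u w)) :
    InOrbit p n g u w := by
  obtain ⟨s, hs⟩ := h
  refine ⟨tv (w - u) ↑s⁻¹, isSymp_tv _ _, ?_⟩
  rw [tv_apply, sympForm_sub_right, sympForm_self, sub_zero, ← hs]
  have : (↑s⁻¹ * ↑s : ZMod (p ^ n)) = 1 := by
    rw [← Units.val_mul, inv_mul_cancel, Units.val_one]
  rw [this, one_smul, add_sub_cancel]

lemma inOrbit_smul (hp : p.Prime) {u w : Ksymp p n g} (c : ZMod (p ^ n))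
    (h : InOrbit p n g u w) : InOrbit p n g (c • u) (c • w) := by
  obtain ⟨α, hα, hk⟩ := h
  haveI : NeZero (p ^ n) := ⟨pow_ne_zero _ hp.pos.ne'⟩
  refine ⟨α, hα, ?_⟩
  have hval : ((c.val : ℕ) : ZMod (p ^ n)) = c := by
    rw [ZMod.natCast_val, ZMod.cast_id]
  calc α (c • u) = α ((c.val : ℕ) • u) := by
        rw [← Nat.cast_smul_eq_nsmul (ZMod (p ^ n)), hval]
    _ = (c.val : ℕ) • α u := map_nsmul α _ _
    _ = c • w := by rw [hk, ← Nat.cast_smul_eq_nsmul (ZMod (p ^ n)), hval]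

/-! ### Arithmetic in `ZMod (p ^ n)` -/

lemma valcast {m : ℕ} [NeZero m] (x : ZMod m) : ((x.val : ℕ) : ZMod m) = x := by
  rw [ZMod.natCast_val, ZMod.cast_id]

lemma isUnit_iff_not_dvd (hp : p.Prime) (hn : 1 ≤ n) (x : ZMod (p ^ n)) :
    IsUnit x ↔ ¬ (p : ZMod (p ^ n)) ∣ x := by
  haveI : NeZero (p ^ n) := ⟨pow_ne_zero _ hp.pos.ne'⟩
  constructor
  · intro hx hdvd
    have hpu : IsUnit (p : ZMod (p ^ n)) := isUnit_of_dvd_unit hdvd hx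
    rw [ZMod.isUnit_iff_coprime] at hpu
    have : p ∣ p ^ n := dvd_pow_self p (by omega)
    have h1 : p = 1 := Nat.eq_one_of_dvd_one (hpu ▸ Nat.dvd_gcd dvd_rfl this)
    exact hp.one_lt.ne' h1
  · intro h
    rw [← valcast x, ZMod.isUnit_iff_coprime]
    have hnd : ¬ p ∣ x.val := fun hd => h (by
      have : ((p : ℕ) : ZMod (p ^ n)) ∣ ((x.val : ℕ) : ZMod (p ^ n)) := Nat.cast_dvd_cast hd
      rwa [valcast] at this)
    exact Nat.Coprime.pow_right n ((hp.coprime_iff_not_dvd.mpr hnd).symm)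

lemma unit_add_nonunit (hp : p.Prime) (hn : 1 ≤ n) {a b : ZMod (p ^ n)}
    (ha : IsUnit a) (hb : ¬ IsUnit b) : IsUnit (a + b) := by
  rw [isUnit_iff_not_dvd hp hn] at ha ⊢
  rw [isUnit_iff_not_dvd hp hn, not_not] at hb
  intro hab
  exact ha ((dvd_add_right hb).mp (by rwa [add_comm] at hab))

lemma ppow_zero (hp : p.Prime) : ((p : ZMod (p ^ n)) ^ n) = 0 := by
  have : ((p ^ n : ℕ) : ZMod (p ^ n)) = 0 := ZMod.natCast_self _
  push_cast at this
  exact this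

lemma pow_dvd_iff (hp : p.Prime) {s : ℕ} (hs : s ≤ n) (x : ZMod (p ^ n)) :
    (p : ZMod (p ^ n)) ^ s ∣ x ↔ (p : ZMod (p ^ n)) ^ (n - s) * x = 0 := by
  haveI : NeZero (p ^ n) := ⟨pow_ne_zero _ hp.pos.ne'⟩
  constructor
  · rintro ⟨c, rfl⟩
    rw [← mul_assoc, ← pow_add]
    have : n - s + s = n := by omega
    rw [this, ppow_zero hp, zero_mul]
  · intro h
    rw [← valcast x] at h ⊢
    have h2 : ((p ^ (n - s) * x.val : ℕ) : ZMod (p ^ n)) = 0 := by push_cast; exact h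
    rw [ZMod.natCast_eq_zero_iff] at h2
    have hpow : p ^ n = p ^ (n - s) * p ^ s := by
      rw [← pow_add]; congr 1; omega
    have h3 : p ^ (n - s) * p ^ s ∣ p ^ (n - s) * x.val := hpow ▸ h2
    have h4 : p ^ s ∣ x.val :=
      (mul_dvd_mul_iff_left (a := p ^ (n - s)) (pow_ne_zero _ hp.pos.ne')).mp h3
    obtain ⟨d, hd⟩ := h4
    exact ⟨(d : ZMod (p ^ n)), by rw [hd]; push_cast; ring⟩

/-! ### Invariance of `DivBy` -/

lemma divBy_iff_nsmul (hp : p.Prime) {s : ℕ} (hs : s ≤ n) (k : Ksymp p n g) :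
    DivBy p n g s k ↔ (p ^ (n - s) : ℕ) • k = 0 := by
  have key : ∀ x : ZMod (p ^ n), (p : ZMod (p ^ n)) ^ s ∣ x ↔ (p ^ (n - s) : ℕ) • x = 0 := by
    intro x
    rw [pow_dvd_iff hp hs, nsmul_eq_mul]
    push_cast
    rfl
  constructor
  · rintro ⟨h1, h2⟩
    ext i
    · exact (key _).mp (h1 i)
    · exact (key _).mp (h2 i)
  · intro h
    constructor <;> intro i
    · exact (key _).mpr (congrArg (fun z => z.1 i) h)
    · exact (key _).mpr (congrArg (fun z => z.2 i) h)

lemma divBy_map (hp : p.Prime) {s : ℕ} (hs : s ≤ n) (α : AddAut (Ksymp p n g))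
    (k : Ksymp p n g) : DivBy p n g s (α k) ↔ DivBy p n g s k := by
  rw [divBy_iff_nsmul hp hs, divBy_iff_nsmul hp hs]
  constructor
  · intro h
    have : α ((p ^ (n - s) : ℕ) • k) = α 0 := by rw [map_nsmul, map_zero, h]
    exact α.injective this
  · intro h
    rw [← map_nsmul, h, map_zero]

lemma inOrbit_divBy_iff (hp : p.Prime) {s : ℕ} (hs : s ≤ n) {k l : Ksymp p n g}
    (h : InOrbit p n g k l) : (DivBy p n g s k ↔ DivBy p n g s l) := by
  obtain ⟨α, _, hk⟩ := h
  rw [← hk, divBy_map hp hs]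

/-! ### Primitive vectors -/

/-- `k` is primitive: it pairs to a unit with some vector. -/
def Prim (k : Ksymp p n g) : Prop := ∃ l, IsUnit (sympForm p n g k l)

lemma prim_of_unit_entry {k : Ksymp p n g}
    (h : ∃ i, IsUnit (k.1 i) ∨ IsUnit (k.2 i)) : Prim k := by
  obtain ⟨i, hi | hi⟩ := h
  · refine ⟨(0, fun j => if j = i then 1 else 0), ?_⟩
    have : sympForm p n g k (0, fun j => if j = i then 1 else 0) = k.1 i := by
      simp [sympForm, mul_ite, Finset.sum_ite_eq']
    rwa [this]
  · refine ⟨(fun j => if j = i then 1 else 0, 0), ?_⟩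
    have : sympForm p n g k (fun j => if j = i then 1 else 0, 0) = -(k.2 i) := by
      simp [sympForm, ite_mul, Finset.sum_ite_eq']
    rw [this]
    exact hi.neg

lemma inOrbit_of_prim (hp : p.Prime) (hn : 1 ≤ n) {u w : Ksymp p n g}
    (hu : Prim u) (hw : Prim w) : InOrbit p n g u w := by
  obtain ⟨z₀, hz₀⟩ := hu
  obtain ⟨z₁, hz₁⟩ := hw
  -- find z pairing to a unit with both u and w
  have key : ∃ z, IsUnit (sympForm p n g u z) ∧ IsUnit (sympForm p n g w z) := by
    by_cases h0 : IsUnit (sympForm p n g w z₀)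
    · exact ⟨z₀, hz₀, h0⟩
    by_cases h1 : IsUnit (sympForm p n g u z₁)
    · exact ⟨z₁, h1, hz₁⟩
    refine ⟨z₀ + z₁, ?_, ?_⟩
    · rw [sympForm_add_right]
      exact unit_add_nonunit hp hn hz₀ h1
    · rw [sympForm_add_right, add_comm]
      exact unit_add_nonunit hp hn hz₁ h0
  obtain ⟨z, huz, hwz⟩ := key
  exact inOrbit_trans (inOrbit_of_unit huz) (inOrbit_symm (inOrbit_of_unit hwz))

/-! ### Facts about the representatives -/

lemma orbitRep_prim (hg : 1 ≤ g) : Prim (orbitRep p n g 0) := by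
  refine prim_of_unit_entry ⟨⟨0, hg⟩, Or.inl ?_⟩
  simp [orbitRep]

lemma orbitRep_smul (r : ℕ) :
    orbitRep p n g r = (p : ZMod (p ^ n)) ^ r • orbitRep p n g 0 := by
  refine Prod.ext ?_ ?_
  · funext i
    simp only [orbitRep, Prod.smul_fst, Pi.smul_apply, smul_eq_mul]
    split_ifs <;> simp
  · simp [orbitRep]

lemma orbitRep_n_eq_zero (hp : p.Prime) : orbitRep p n g n = 0 := by
  refine Prod.ext ?_ rfl
  funext i
  simp only [orbitRep]
  split_ifs <;> simp [ppow_zero hp]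

lemma divBy_orbitRep (hp : p.Prime) {s r : ℕ} (hsr : s ≤ r) :
    DivBy p n g s (orbitRep p n g r) := by
  constructor <;> intro i
  · simp only [orbitRep]
    split_ifs
    · exact pow_dvd_pow _ hsr
    · exact dvd_zero _
  · exact dvd_zero _

lemma not_divBy_succ_orbitRep (hp : p.Prime) (hg : 1 ≤ g) {r : ℕ} (hr : r < n) :
    ¬ DivBy p n g (r + 1) (orbitRep p n g r) := by
  intro h
  have h1 := h.1 ⟨0, hg⟩
  have he0 : (orbitRep p n g r).1 ⟨0, hg⟩ = (p : ZMod (p ^ n)) ^ r := by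
    simp [orbitRep]
  rw [he0, pow_dvd_iff hp (by omega)] at h1
  rw [← pow_add] at h1
  have he : n - (r + 1) + r = n - 1 := by omega
  rw [he] at h1
  have h2 : ((p ^ (n - 1) : ℕ) : ZMod (p ^ n)) = 0 := by push_cast; exact h1
  rw [ZMod.natCast_eq_zero_iff] at h2
  rw [Nat.pow_dvd_pow_iff_le_right hp.one_lt] at h2
  omega

/-! ### The key construction -/

lemma orbit_of_exact (hp : p.Prime) (hn : 1 ≤ n) (hg : 1 ≤ g) {r : ℕ} (hr : r < n)
    {k : Ksymp p n g} (h1 : DivBy p n g r k) (h2 : ¬ DivBy p n g (r + 1) k) :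
    InOrbit p n g (orbitRep p n g r) k := by
  haveI : NeZero (p ^ n) := ⟨pow_ne_zero _ hp.pos.ne'⟩
  -- write k = p^r • u with u primitive
  have hc1 : ∀ i, ∃ c, k.1 i = (p : ZMod (p ^ n)) ^ r * c := fun i => h1.1 i
  have hc2 : ∀ i, ∃ c, k.2 i = (p : ZMod (p ^ n)) ^ r * c := fun i => h1.2 i
  set u : Ksymp p n g := (fun i => (hc1 i).choose, fun i => (hc2 i).choose) with hu
  have hk : k = (p : ZMod (p ^ n)) ^ r • u := by
    refine Prod.ext (funext fun i => ?_) (funext fun i => ?_)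
    · simpa using (hc1 i).choose_spec
    · simpa using (hc2 i).choose_spec
  have hprim : Prim u := by
    rw [DivBy, not_and_or] at h2
    rcases h2 with h2 | h2
    · push_neg at h2
      obtain ⟨i, hi⟩ := h2
      refine prim_of_unit_entry ⟨i, Or.inl ?_⟩
      rw [isUnit_iff_not_dvd hp hn]
      rintro ⟨d, hd⟩
      exact hi ⟨d, by rw [(hc1 i).choose_spec,
        show (hc1 i).choose = (p : ZMod (p ^ n)) * d from hd]; ring⟩
    · push_neg at h2
      obtain ⟨i, hi⟩ := h2
      refine prim_of_unit_entry ⟨i, Or.inr ?_⟩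
      rw [isUnit_iff_not_dvd hp hn]
      rintro ⟨d, hd⟩
      exact hi ⟨d, by rw [(hc2 i).choose_spec,
        show (hc2 i).choose = (p : ZMod (p ^ n)) * d from hd]; ring⟩
  have h0 : InOrbit p n g (orbitRep p n g 0) u :=
    inOrbit_of_prim hp hn (orbitRep_prim hg) hprim
  have := inOrbit_smul hp ((p : ZMod (p ^ n)) ^ r) h0
  rwa [← orbitRep_smul, ← hk] at this

end SympAux

open SympAux

theorem symplectic_orbits (hp : p.Prime) (hodd : Odd p)
    (hn : 1 ≤ n) (hg : 1 ≤ g) :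
    (∀ k : Ksymp p n g, ∃ r ≤ n, InOrbit p n g (orbitRep p n g r) k) ∧
    (∀ r s : ℕ, r ≤ n → s ≤ n →
      InOrbit p n g (orbitRep p n g r) (orbitRep p n g s) → r = s) ∧
    (∀ r ≤ n, ∀ k : Ksymp p n g,
      InOrbit p n g (orbitRep p n g r) k ↔
        (DivBy p n g r k ∧ (r = n ∨ ¬ DivBy p n g (r + 1) k))) := by
  classical
  have divBy_n_eq_zero : ∀ k : Ksymp p n g, DivBy p n g n k → k = 0 := by
    intro k h
    refine Prod.ext (funext fun i => ?_) (funext fun i => ?_)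
    · have := h.1 i
      rw [ppow_zero hp, zero_dvd_iff] at this
      simpa using this
    · have := h.2 i
      rw [ppow_zero hp, zero_dvd_iff] at this
      simpa using this
  have divBy_zero : ∀ k : Ksymp p n g, DivBy p n g 0 k := by
    intro k
    constructor <;> intro i <;> simp
  have part3 : ∀ r ≤ n, ∀ k : Ksymp p n g,
      InOrbit p n g (orbitRep p n g r) k ↔
        (DivBy p n g r k ∧ (r = n ∨ ¬ DivBy p n g (r + 1) k)) := by
    intro r hr k
    constructor
    · intro h
      refine ⟨(inOrbit_divBy_iff hp hr h).mp (divBy_orbitRep hp le_rfl), ?_⟩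
      rcases eq_or_lt_of_le hr with he | hlt
      · exact Or.inl he
      · exact Or.inr fun hd => not_divBy_succ_orbitRep hp hg hlt
          ((inOrbit_divBy_iff hp (show r + 1 ≤ n by omega) h).mpr hd)
    · rintro ⟨h1, h2 | h2⟩
      · subst h2
        rw [divBy_n_eq_zero k h1, orbitRep_n_eq_zero hp]
        exact inOrbit_refl _
      · have hrlt : r < n := by
          rcases eq_or_lt_of_le hr with he | hlt
          · exfalso
            subst he
            have hk0 : k = 0 := divBy_n_eq_zero k h1
            refine h2 ?_
            constructor <;> intro i <;> rw [hk0] <;> simp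
          · exact hlt
        exact orbit_of_exact hp hn hg hrlt h1 h2
  refine ⟨?_, ?_, part3⟩
  · -- every vector lies in some orbit
    intro k
    by_cases hk : k = 0
    · exact ⟨n, le_rfl, by rw [hk, orbitRep_n_eq_zero hp]; exact inOrbit_refl _⟩
    · have hnd : ¬ DivBy p n g n k := fun h => hk (divBy_n_eq_zero k h)
      have hex : ∃ m, ¬ DivBy p n g (m + 1) k :=
        ⟨n - 1, by rwa [show n - 1 + 1 = n by omega]⟩
      set r := Nat.find hex with hrdef
      have hr2 : ¬ DivBy p n g (r + 1) k := Nat.find_spec hex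
      have hrle : r ≤ n - 1 :=
        Nat.find_min' hex (by rwa [show n - 1 + 1 = n by omega])
      have hr1 : DivBy p n g r k := by
        match hr : r, hr2 with
        | 0, _ => exact divBy_zero k
        | (r' + 1), _ =>
          have := Nat.find_min hex (show r' < Nat.find hex by omega)
          simpa using this
      exact ⟨r, by omega, orbit_of_exact hp hn hg (by omega) hr1 hr2⟩
  · -- distinct representatives lie in distinct orbits
    intro r s hr hs horb
    have aux : ∀ r s : ℕ, r ≤ n → s ≤ n → r < s →
        InOrbit p n g (orbitRep p n g r) (orbitRep p n g s) → False := by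
      intro r s hr hs hlt horb
      have hd : DivBy p n g (r + 1) (orbitRep p n g s) := divBy_orbitRep hp (by omega)
      have := (inOrbit_divBy_iff hp (show r + 1 ≤ n by omega) horb).mpr hd
      exact not_divBy_succ_orbitRep hp hg (by omega) this
    rcases lt_trichotomy r s with h | h | h
    · exact absurd horb fun horb => aux r s hr hs h horb
    · exact h
    · exact absurd (inOrbit_symm horb) fun horb => aux s r hs hr h horb
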